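/- For any finite simple graph G with n vertices and m edges, the first Zagreb coindex satisfies \overline{M_1}(G) = 2m(n-1) - M_1(G), where M_1(G) = \sum_{v} d(v)^2 and \overline{M_1}(G) = \sum_{uv \notin E(G), u \neq v} (d(u) + d(v)). -/

import Mathlib

open scoped Classical
open Finset

noncomputable section

namespace Zagreb

variable {V : Type*}

/-- First Zagreb index. -/
def M1 (G : SimpleGraph V) [Fintype V] : ℕ :=
  ∑ v, (G.degree v) ^ 2

/-- Second Zagreb index. -/
def M2 (G : SimpleGraph V) [Fintype V] : ℕ :=
  ∑ e ∈ G.edgeFinset,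
    Sym2.lift ⟨fun u v => G.degree u * G.degree v, fun _ _ => mul_comm _ _⟩ e

/-- First Zagreb coindex: sum over unordered pairs of distinct non-adjacent vertices. -/
def M1bar (G : SimpleGraph V) [Fintype V] : ℕ :=
  ∑ e ∈ Gᶜ.edgeFinset,
    Sym2.lift ⟨fun u v => G.degree u + G.degree v, fun _ _ => add_comm _ _⟩ e

/-- Second Zagreb coindex. -/
def M2bar (G : SimpleGraph V) [Fintype V] : ℕ :=
  ∑ e ∈ Gᶜ.edgeFinset,
    Sym2.lift ⟨fun u v => G.degree u * G.degree v, fun _ _ => mul_comm _ _⟩ e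

/-- The cycle-star graph: a cycle of length `k` together with `l` leaves
attached to the cycle vertex `0`. -/
def cycleStar (k l : ℕ) : SimpleGraph (Fin k ⊕ Fin l) where
  Adj x y :=
    match x, y with
    | Sum.inl i, Sum.inl j => i ≠ j ∧ ((i.val + 1) % k = j.val ∨ (j.val + 1) % k = i.val)
    | Sum.inl i, Sum.inr _ => i.val = 0
    | Sum.inr _, Sum.inl i => i.val = 0
    | Sum.inr _, Sum.inr _ => False
  symm := by
    refine ⟨?_⟩
    rintro (i | a) (j | b) h
    · exact ⟨Ne.symm h.1, h.2.symm⟩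
    · exact h
    · exact h
    · exact h
  loopless := by
    refine ⟨?_⟩
    rintro (i | a) h
    · exact h.1 rfl
    · exact h

/-- The subdivision graph: each edge is replaced by a path of length 2. -/
def subdivision (G : SimpleGraph V) : SimpleGraph (V ⊕ G.edgeSet) where
  Adj x y :=
    match x, y with
    | Sum.inl v, Sum.inr e => v ∈ (e : Sym2 V)
    | Sum.inr e, Sum.inl v => v ∈ (e : Sym2 V)
    | _, _ => False
  symm := by refine ⟨?_⟩; rintro (v | e) (w | f) h <;> simp_all
  loopless := by refine ⟨?_⟩; rintro (v | e) h <;> simp_all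

/-- The line graph of `G`. -/
def lineGraph (G : SimpleGraph V) : SimpleGraph G.edgeSet where
  Adj e f := e ≠ f ∧ ∃ v, v ∈ (e : Sym2 V) ∧ v ∈ (f : Sym2 V)
  symm := by
    refine ⟨?_⟩
    rintro e f ⟨hne, v, hv1, hv2⟩
    exact ⟨hne.symm, v, hv2, hv1⟩
  loopless := by refine ⟨?_⟩; rintro e ⟨hne, _⟩; exact hne rfl

/-- A cut-vertex: a vertex of a connected graph whose removal disconnects it. -/
def IsCutVertex (G : SimpleGraph V) (v : V) : Prop :=
  G.Connected ∧ ¬ (G.induce {u | u ≠ v}).Connected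

/-- The line cut-vertex graph of `G`: vertices are the edges and cut-vertices of `G`;
two vertices are adjacent iff the corresponding edges share an endpoint, or one is
an edge incident to the other, a cut-vertex. -/
def lineCutGraph (G : SimpleGraph V) :
    SimpleGraph (G.edgeSet ⊕ {v : V // IsCutVertex G v}) where
  Adj x y :=
    match x, y with
    | Sum.inl e, Sum.inl f => e ≠ f ∧ ∃ v, v ∈ (e : Sym2 V) ∧ v ∈ (f : Sym2 V)
    | Sum.inl e, Sum.inr c => (c : V) ∈ (e : Sym2 V)
    | Sum.inr c, Sum.inl e => (c : V) ∈ (e : Sym2 V)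
    | Sum.inr _, Sum.inr _ => False
  symm := by
    refine ⟨?_⟩
    rintro (e | c) (f | d) h
    · exact ⟨Ne.symm h.1, h.2.choose, h.2.choose_spec.2, h.2.choose_spec.1⟩
    · exact h
    · exact h
    · exact h
  loopless := by
    refine ⟨?_⟩
    rintro (e | c) h
    · exact h.1 rfl
    · exact h

end Zagreb


lemma sum_dart_fst' {V : Type*} [Fintype V] (H : SimpleGraph V) [DecidableRel H.Adj] (g : V → ℕ) :
    ∑ d : H.Dart, g d.fst = ∑ v, H.degree v * g v := by
  rw [← Finset.sum_fiberwise_of_maps_to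
      (fun (d : H.Dart) (_ : d ∈ univ) => Finset.mem_univ d.fst) (fun d => g d.fst)]
  refine Finset.sum_congr rfl fun v _ => ?_
  have hg : ∀ d ∈ Finset.univ.filter (fun d : H.Dart => d.fst = v), g d.fst = g v := by
    intro d hd
    simp only [Finset.mem_filter] at hd
    rw [hd.2]
  rw [Finset.sum_congr rfl hg, Finset.sum_const, smul_eq_mul,
    ← H.dart_fst_fiber_card_eq_degree v]

lemma sum_edge' {V : Type*} [Fintype V] (H : SimpleGraph V) [DecidableRel H.Adj] (g : V → ℕ) :
    ∑ e ∈ H.edgeFinset, Sym2.lift ⟨fun u v => g u + g v, fun _ _ => add_comm _ _⟩ e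
      = ∑ v, H.degree v * g v := by
  classical
  rw [← sum_dart_fst' H g,
    ← Finset.sum_fiberwise_of_maps_to
      (fun (d : H.Dart) (_ : d ∈ univ) => SimpleGraph.mem_edgeFinset.mpr d.edge_mem)
      (fun d => g d.fst)]
  refine Finset.sum_congr rfl fun e he => ?_
  induction e with
  | _ u v =>
    rw [SimpleGraph.mem_edgeFinset, SimpleGraph.mem_edgeSet] at he
    have hfib : (univ.filter fun d : H.Dart => d.edge = s(u, v)) =
        {(⟨(u, v), he⟩ : H.Dart), (⟨(u, v), he⟩ : H.Dart).symm} := by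
      have := SimpleGraph.Dart.edge_fiber (⟨(u, v), he⟩ : H.Dart)
      convert this <;> rfl
    rw [hfib, Finset.sum_insert, Finset.sum_singleton]
    · simp [SimpleGraph.Dart.symm]
    · simp only [Finset.mem_singleton]
      intro hcon
      exact H.ne_of_adj he (congrArg (fun d : H.Dart => d.fst) hcon)

open Zagreb in
theorem stmt0 {V : Type*} [Fintype V] (G : SimpleGraph V) :
    (M1bar G : ℤ) =
      2 * (G.edgeFinset.card : ℤ) * ((Fintype.card V : ℤ) - 1) - (M1 G : ℤ) := by
  classical
  unfold M1bar M1
  rw [sum_edge' Gᶜ (fun v => G.degree v)]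
  have hdeg : ∀ v : V, ((Gᶜ.degree v : ℕ) : ℤ) = ((Fintype.card V : ℤ) - 1) - G.degree v := by
    intro v
    have h1 : G.degree v ≤ Fintype.card V - 1 :=
      Nat.le_sub_one_of_lt (G.degree_lt_card_verts v)
    have h2 : 1 ≤ Fintype.card V := Fintype.card_pos_iff.mpr ⟨v⟩
    rw [G.degree_compl v, Nat.cast_sub h1, Nat.cast_sub h2]
    push_cast
    ring
  have hsum : (∑ v, (G.degree v : ℤ)) = 2 * G.edgeFinset.card := by
    exact_mod_cast congrArg (Nat.cast : ℕ → ℤ) G.sum_degrees_eq_twice_card_edges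
  push_cast
  rw [Finset.sum_congr rfl (fun v _ => by rw [hdeg v])]
  have step : ∀ v : V, ((Fintype.card V : ℤ) - 1 - G.degree v) * G.degree v
      = ((Fintype.card V : ℤ) - 1) * G.degree v - (G.degree v : ℤ) ^ 2 := fun v => by ring
  rw [Finset.sum_congr rfl (fun v _ => step v), Finset.sum_sub_distrib, ← Finset.mul_sum, hsum]
  ring
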